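/- arXiv:1009.2523 — 3 statements merged into one kernel-verified Lean document; each statement's English description precedes it below -/
import Mathlib

section
/- Let A ⊆ ℝ² be a nonempty compact convex set and let x be an extreme point of A. For every ε > 0 there exists δ > 0 such that for every nonempty compact convex set A' ⊆ ℝ² with Hausdorff distance d_H(A, A') < δ, there exists an extreme point x' of A' with ‖x − x'‖₁ < ε. -/
/-- The ℓ¹-norm on ℝ². -/
def norm1 (x : ℝ × ℝ) : ℝ := |x.1| + |x.2|

/-- The closed `r`-neighborhood of a set in the ℓ¹-metric on ℝ². -/
def nbhd1 (S : Set (ℝ × ℝ)) (r : ℝ) : Set (ℝ × ℝ) := {x | ∃ y ∈ S, norm1 (x - y) ≤ r}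

/-- The Hausdorff distance in the ℓ¹-metric:
`d_H(A,B) = inf {ε > 0 : A ⊆ B^(ε) and B ⊆ A^(ε)}`. -/
noncomputable def hdist1 (A B : Set (ℝ × ℝ)) : ℝ :=
  sInf {ε : ℝ | 0 < ε ∧ A ⊆ nbhd1 B ε ∧ B ⊆ nbhd1 A ε}

lemma norm_le_norm1 (p : ℝ × ℝ) : ‖p‖ ≤ norm1 p := by
  rw [Prod.norm_def, norm1]
  simp only [Real.norm_eq_abs]
  exact max_le (le_add_of_nonneg_right (abs_nonneg _)) (le_add_of_nonneg_left (abs_nonneg _))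

lemma norm1_le_two (p : ℝ × ℝ) : norm1 p ≤ 2 * ‖p‖ := by
  rw [Prod.norm_def, norm1]
  have h1 : |p.1| ≤ max ‖p.1‖ ‖p.2‖ := le_max_of_le_left (by simp [Real.norm_eq_abs])
  have h2 : |p.2| ≤ max ‖p.1‖ ‖p.2‖ := le_max_of_le_right (by simp [Real.norm_eq_abs])
  linarith

lemma isCompact_convexJoin {u v : Set (ℝ × ℝ)} (hu : IsCompact u) (hv : IsCompact v) :
    IsCompact (convexJoin ℝ u v) := by
  have : convexJoin ℝ u v =
      (fun p : (ℝ × ℝ) × (ℝ × ℝ) × ℝ => (1 - p.2.2) • p.1 + p.2.2 • p.2.1) ''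
        (u ×ˢ v ×ˢ Set.Icc (0:ℝ) 1) := by
    ext y
    simp only [mem_convexJoin, Set.mem_image, Set.mem_prod, segment_eq_image]
    constructor
    · rintro ⟨a, ha, b, hb, θ, hθ, rfl⟩
      exact ⟨(a, b, θ), ⟨ha, hb, hθ⟩, rfl⟩
    · rintro ⟨⟨a, b, θ⟩, ⟨ha, hb, hθ⟩, rfl⟩
      exact ⟨a, ha, b, hb, θ, hθ, rfl⟩
  rw [this]
  exact ((hu.prod (hv.prod isCompact_Icc)).image (by fun_prop))

lemma join_subset_convexHull (s : Set (ℝ × ℝ)) :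
    convexJoin ℝ s (convexJoin ℝ s s) ⊆ convexHull ℝ s := by
  intro y hy
  rw [mem_convexJoin] at hy
  obtain ⟨a, ha, z, hz, hyz⟩ := hy
  rw [mem_convexJoin] at hz
  obtain ⟨b, hb, c, hc, hzbc⟩ := hz
  have hzH : z ∈ convexHull ℝ s :=
    (convex_convexHull ℝ s).segment_subset (subset_convexHull ℝ s hb)
      (subset_convexHull ℝ s hc) hzbc
  exact (convex_convexHull ℝ s).segment_subset (subset_convexHull ℝ s ha) hzH hyz

lemma convexHull_subset_join (s : Set (ℝ × ℝ)) :
    convexHull ℝ s ⊆ convexJoin ℝ s (convexJoin ℝ s s) := by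
  intro y hy
  rw [convexHull_eq_union] at hy
  simp only [Set.mem_iUnion, exists_prop] at hy
  obtain ⟨t, hts, hai, hyt⟩ := hy
  have hcard : t.card ≤ 3 := by
    have h1 := hai.card_le_finrank_succ
    have h2 : Module.finrank ℝ (vectorSpan ℝ (Set.range ((↑) : t → ℝ × ℝ))) ≤
        Module.finrank ℝ (ℝ × ℝ) := Submodule.finrank_le _
    have h3 : Module.finrank ℝ (ℝ × ℝ) = 2 := by
      simp [Module.finrank_prod]
    rw [Fintype.card_coe] at h1
    omega
  interval_cases h : t.card
  · rw [Finset.card_eq_zero.mp h] at hyt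
    simp at hyt
  · obtain ⟨a, rfl⟩ := Finset.card_eq_one.mp h
    rw [Finset.coe_singleton, convexHull_singleton, Set.mem_singleton_iff] at hyt
    have ha : a ∈ s := hts (by simp)
    rw [hyt]
    exact mem_convexJoin.mpr ⟨a, ha, a, mem_convexJoin.mpr ⟨a, ha, a, ha, left_mem_segment _ _ _⟩,
      left_mem_segment _ _ _⟩
  · obtain ⟨a, b, hab, rfl⟩ := Finset.card_eq_two.mp h
    have ha : a ∈ s := hts (by simp)
    have hb : b ∈ s := hts (by simp)
    rw [Finset.coe_insert, Finset.coe_singleton, convexHull_pair] at hyt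
    exact mem_convexJoin.mpr ⟨a, ha, b, mem_convexJoin.mpr ⟨b, hb, b, hb, left_mem_segment _ _ _⟩,
      hyt⟩
  · obtain ⟨a, b, c, hab, hac, hbc, rfl⟩ := Finset.card_eq_three.mp h
    have ha : a ∈ s := hts (by simp)
    have hb : b ∈ s := hts (by simp)
    have hc : c ∈ s := hts (by simp)
    rw [Finset.coe_insert, Finset.coe_insert, Finset.coe_singleton,
      convexHull_insert (Set.insert_nonempty _ _), convexHull_pair] at hyt
    rw [mem_convexJoin] at hyt
    obtain ⟨a', ha', z, hz, hyz⟩ := hyt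
    rw [Set.mem_singleton_iff] at ha'
    subst ha'
    exact mem_convexJoin.mpr ⟨a', ha, z, mem_convexJoin.mpr ⟨b, hb, c, hc, hz⟩, hyz⟩

lemma isCompact_convexHull_plane {s : Set (ℝ × ℝ)} (hs : IsCompact s) :
    IsCompact (convexHull ℝ s) := by
  have : convexHull ℝ s = convexJoin ℝ s (convexJoin ℝ s s) :=
    le_antisymm (convexHull_subset_join s) (join_subset_convexHull s)
  rw [this]
  exact isCompact_convexJoin hs (isCompact_convexJoin hs hs)

/-- Extreme points of compact convex sets in the plane are lower
semi-continuous with respect to the Hausdorff metric: if `x` is an extreme point of a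
nonempty compact convex `A ⊆ ℝ²` and `ε > 0`, then any nonempty compact convex `A'`
sufficiently Hausdorff-close to `A` has an extreme point within ℓ¹-distance `ε` of `x`. -/
theorem extreme_points_semicontinuous
    (A : Set (ℝ × ℝ)) (hAne : A.Nonempty) (hAcp : IsCompact A) (hAcv : Convex ℝ A)
    (x : ℝ × ℝ) (hx : x ∈ A.extremePoints ℝ) (ε : ℝ) (hε : 0 < ε) :
    ∃ δ : ℝ, 0 < δ ∧
      ∀ A' : Set (ℝ × ℝ), A'.Nonempty → IsCompact A' → Convex ℝ A' → hdist1 A A' < δ →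
        ∃ x' ∈ A'.extremePoints ℝ, norm1 (x - x') < ε := by
  classical
  set r : ℝ := ε / 4 with hr_def
  have hrpos : 0 < r := by positivity
  set K : Set (ℝ × ℝ) := convexHull ℝ (A \ Metric.ball x r) with hK_def
  have hKcp : IsCompact K := isCompact_convexHull_plane (hAcp.diff Metric.isOpen_ball)
  have hxK : x ∉ K := by
    intro hxmem
    have hsub : K ⊆ convexHull ℝ (A \ {x}) :=
      convexHull_mono (Set.diff_subset_diff_right
        (Set.singleton_subset_iff.mpr (Metric.mem_ball_self hrpos)))
    have := (hAcv.mem_extremePoints_iff_mem_diff_convexHull_diff.mp hx).2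
    exact this (hsub hxmem)
  obtain ⟨f, u, hfK, hfu⟩ :=
    geometric_hahn_banach_closed_point (convex_convexHull ℝ _) hKcp.isClosed hxK
  set c : ℝ := f x - u with hc_def
  have hcpos : 0 < c := by simp [hc_def]; linarith
  refine ⟨min r (c / (2 * (‖f‖ + 1))), lt_min hrpos (by positivity), ?_⟩
  intro A' hA'ne hA'cp hA'cv hdist
  -- extract an actual "d" witnessing the Hausdorff closeness
  set S : Set ℝ := {ε : ℝ | 0 < ε ∧ A ⊆ nbhd1 A' ε ∧ A' ⊆ nbhd1 A ε} with hS_def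
  obtain ⟨R, hR⟩ := hAcp.isBounded.subset_closedBall (0 : ℝ × ℝ)
  obtain ⟨R', hR'⟩ := hA'cp.isBounded.subset_closedBall (0 : ℝ × ℝ)
  have hSne : S.Nonempty := by
    refine ⟨2 * (|R| + |R'|) + 1, by positivity, ?_, ?_⟩
    · intro a ha
      obtain ⟨b0, hb0⟩ := hA'ne
      refine ⟨b0, hb0, ?_⟩
      have h1 : ‖a‖ ≤ |R| := le_trans (mem_closedBall_zero_iff.mp (hR ha)) (le_abs_self R)
      have h2 : ‖b0‖ ≤ |R'| := le_trans (mem_closedBall_zero_iff.mp (hR' hb0)) (le_abs_self R')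
      have h3 : norm1 (a - b0) ≤ 2 * ‖a - b0‖ := norm1_le_two _
      have h4 : ‖a - b0‖ ≤ ‖a‖ + ‖b0‖ := norm_sub_le _ _
      linarith
    · intro b hb
      obtain ⟨a0, ha0⟩ := hAne
      refine ⟨a0, ha0, ?_⟩
      have h1 : ‖a0‖ ≤ |R| := le_trans (mem_closedBall_zero_iff.mp (hR ha0)) (le_abs_self R)
      have h2 : ‖b‖ ≤ |R'| := le_trans (mem_closedBall_zero_iff.mp (hR' hb)) (le_abs_self R')
      have h3 : norm1 (b - a0) ≤ 2 * ‖b - a0‖ := norm1_le_two _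
      have h4 : ‖b - a0‖ ≤ ‖b‖ + ‖a0‖ := norm_sub_le _ _
      linarith
  obtain ⟨d, hdS, hdδ⟩ := exists_lt_of_csInf_lt hSne hdist
  obtain ⟨hd0, hAd, hA'd⟩ := hdS
  have hdr : d < r := lt_of_lt_of_le hdδ (min_le_left _ _)
  have hdc : 2 * ‖f‖ * d < c := by
    have h1 : d < c / (2 * (‖f‖ + 1)) := lt_of_lt_of_le hdδ (min_le_right _ _)
    have h2 : 0 < 2 * (‖f‖ + 1) := by positivity
    have h3 : d * (2 * (‖f‖ + 1)) < c := by
      rw [lt_div_iff₀ h2] at h1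
      exact h1
    nlinarith [norm_nonneg f, hd0.le]
  -- a point of A' near x
  obtain ⟨x₀, hx₀A', hx₀⟩ := hAd hx.1
  -- maximize f over A'
  obtain ⟨m, hmA', hm⟩ := hA'cp.exists_isMaxOn hA'ne f.continuous.continuousOn
  set F : Set (ℝ × ℝ) := A' ∩ f ⁻¹' Set.Ici (f m) with hF_def
  have hmF : m ∈ F := ⟨hmA', by simp⟩
  have hFcp : IsCompact F := hA'cp.inter_right (isClosed_Ici.preimage f.continuous)
  have hFeq : F = {y ∈ A' | ∀ z ∈ A', f z ≤ f y} := by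
    ext y
    constructor
    · rintro ⟨hyA', hy⟩
      exact ⟨hyA', fun z hz => le_trans (hm hz) hy⟩
    · rintro ⟨hyA', hy⟩
      exact ⟨hyA', hy m hmA'⟩
  have hexp : IsExposed ℝ A' F := fun _ => ⟨f, hFeq⟩
  obtain ⟨x', hx'F⟩ := hFcp.extremePoints_nonempty ⟨m, hmF⟩
  have hx'ext : x' ∈ A'.extremePoints ℝ :=
    hexp.isExtreme.extremePoints_subset_extremePoints hx'F
  refine ⟨x', hx'ext, ?_⟩
  have hx'F' : x' ∈ F := hx'F.1
  have hx'A' : x' ∈ A' := hx'F'.1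
  -- f x₀ is close to f x
  have hxx₀ : ‖x - x₀‖ ≤ d := le_trans (norm_le_norm1 _) hx₀
  have hfx₀ : f x - ‖f‖ * d ≤ f x₀ := by
    have h1 := f.le_opNorm (x - x₀)
    rw [map_sub] at h1
    have h2 : ‖f‖ * ‖x - x₀‖ ≤ ‖f‖ * d := mul_le_mul_of_nonneg_left hxx₀ (norm_nonneg f)
    rw [Real.norm_eq_abs] at h1
    have := abs_le.mp (le_trans h1 h2)
    linarith [this.1, this.2]
  -- a point z of A near x'
  obtain ⟨z, hzA, hz⟩ := hA'd hx'A'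
  have hx'z : ‖x' - z‖ ≤ d := le_trans (norm_le_norm1 _) hz
  have hfz : f x' - ‖f‖ * d ≤ f z := by
    have h1 := f.le_opNorm (x' - z)
    rw [map_sub] at h1
    have h2 : ‖f‖ * ‖x' - z‖ ≤ ‖f‖ * d := mul_le_mul_of_nonneg_left hx'z (norm_nonneg f)
    rw [Real.norm_eq_abs] at h1
    have := abs_le.mp (le_trans h1 h2)
    linarith [this.1, this.2]
  have hmx' : f m ≤ f x' := hx'F'.2
  have hx₀m : f x₀ ≤ f m := hm hx₀A'
  have hfzu : u < f z := by
    have : f x - 2 * ‖f‖ * d ≤ f z := by linarith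
    have hcc : f x - c = u := by simp [hc_def]
    linarith
  have hzball : z ∈ Metric.ball x r := by
    by_contra hcon
    have hzK : z ∈ K := subset_convexHull ℝ _ ⟨hzA, hcon⟩
    exact absurd (hfK z hzK) (not_lt.mpr hfzu.le)
  have hzx : ‖z - x‖ < r := by
    rw [Metric.mem_ball, dist_eq_norm] at hzball
    exact hzball
  have hfin : ‖x - x'‖ < 2 * r := by
    have h1 : x - x' = (x - z) + (z - x') := by ring
    have h2 : ‖x - x'‖ ≤ ‖x - z‖ + ‖z - x'‖ := h1 ▸ norm_add_le _ _
    have h3 : ‖x - z‖ = ‖z - x‖ := norm_sub_rev _ _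
    have h4 : ‖z - x'‖ = ‖x' - z‖ := norm_sub_rev _ _
    linarith
  have := norm1_le_two (x - x')
  have : norm1 (x - x') < 4 * r := by linarith
  linarith [this, hr_def ▸ this]
end

section
/- Let μ ∈ ℳ and let Q ⊆ (0,∞) be a Borel set with μ({q}) = 0 for all q ∈ Q. Then ℙ-almost surely the following holds: for every pair of vertices x, y ∈ ℤ², any two geodesics from x to y contain exactly the same set of edges whose passage time lies in Q. -/
open MeasureTheory
open scoped Pointwise

/-- Sites of the lattice ℤ². -/
abbrev Site := ℤ × ℤ

/-- An edge of ℤ² is encoded by its lower-left endpoint together with a direction: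
`true` for the horizontal edge to `(p.1+1, p.2)`, `false` for the vertical edge to
`(p.1, p.2+1)`. This parametrizes the nearest-neighbor edge set 𝔼 bijectively. -/
abbrev Edge := Site × Bool

/-- The two endpoints of an edge. -/
def edgeEnds (e : Edge) : Site × Site :=
  (e.1, if e.2 then (e.1.1 + 1, e.1.2) else (e.1.1, e.1.2 + 1))

/-- Nearest-neighbor adjacency in ℤ². -/
def SiteAdj (u v : Site) : Prop := |u.1 - v.1| + |u.2 - v.2| = 1

/-- The edge joining two adjacent sites (junk value if the sites are not adjacent). -/
def siteEdge (u v : Site) : Edge :=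
  if v.1 = u.1 + 1 ∧ v.2 = u.2 then (u, true)
  else if u.1 = v.1 + 1 ∧ u.2 = v.2 then (v, true)
  else if v.2 = u.2 + 1 ∧ v.1 = u.1 then (u, false)
  else (v, false)

/-- A (finite) path from `x` to `y`: a nonempty list of pairwise-adjacent sites
starting at `x` and ending at `y`. -/
def IsPath (x y : Site) (p : List Site) : Prop :=
  p.Chain' SiteAdj ∧ p.head? = some x ∧ p.getLast? = some y

/-- The list of edges traversed by a path (given as a list of sites). -/
def pathEdges (p : List Site) : List Edge :=
  (p.zip p.tail).map fun uv => siteEdge uv.1 uv.2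

/-- The passage time of a path in the configuration `ω`. -/
def pathTime (ω : Edge → ℝ) (p : List Site) : ℝ :=
  ((pathEdges p).map ω).sum

/-- The passage time `τ(x,y)` from `x` to `y`: the infimum of passage times of paths
joining `x` to `y`. -/
noncomputable def T (ω : Edge → ℝ) (x y : Site) : ℝ :=
  sInf {t | ∃ p : List Site, IsPath x y p ∧ pathTime ω p = t}

/-- `p` is a geodesic from `x` to `y` in the configuration `ω`. -/
def IsGeodesic (ω : Edge → ℝ) (x y : Site) (p : List Site) : Prop :=
  IsPath x y p ∧ pathTime ω p = T ω x y

/-- The family ℳ: Borel probability measures on [0,∞) (modeled as measures on ℝ giving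
zero mass to the negative reals) with finite mean and `μ({0}) < 1/2`, where `1/2` is the
critical probability for bond percolation on ℤ². -/
def MemM (μ : Measure ℝ) : Prop :=
  IsProbabilityMeasure μ ∧ μ (Set.Iio 0) = 0 ∧ Integrable id μ ∧ μ {0} < 1/2

/-- `P` is the joint law `μ^𝔼` of an i.i.d. family of edge weights with marginal `μ`:
a probability measure on configuration space whose finite-dimensional cylinder
probabilities are the corresponding products. -/
def IsIIDProduct (μ : Measure ℝ) (P : Measure (Edge → ℝ)) : Prop :=
  IsProbabilityMeasure P ∧
    ∀ (s : Finset Edge) (B : Edge → Set ℝ), (∀ e ∈ s, MeasurableSet (B e)) →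
      P {ω | ∀ e ∈ s, ω e ∈ B e} = ∏ e ∈ s, μ (B e)

/-- The canonical embedding of ℤ² in ℝ². -/
def toR2 (v : Site) : ℝ × ℝ := ((v.1 : ℝ), (v.2 : ℝ))

/-- The (fattened) ball of radius `t` around the origin: the union of unit cubes centered
at the lattice points `x` with `τ(0,x) ≤ t`. -/
def fppBall (ω : Edge → ℝ) (t : ℝ) : Set (ℝ × ℝ) :=
  {x | ∃ v : Site, T ω 0 v ≤ t ∧ |x.1 - (v.1 : ℝ)| ≤ 1/2 ∧ |x.2 - (v.2 : ℝ)| ≤ 1/2}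

/-- `B` is the limit shape of first-passage percolation with edge-weight distribution `μ`
(whose i.i.d. joint law is `P`): `B` is compact and convex with nonempty interior, and for
every `δ > 0`, `P`-a.s. `(1-δ)B ⊆ (1/t)B(t) ⊆ (1+δ)B` for all sufficiently large `t`. -/
def IsLimitShape (P : Measure (Edge → ℝ)) (B : Set (ℝ × ℝ)) : Prop :=
  IsCompact B ∧ Convex ℝ B ∧ (interior B).Nonempty ∧
    ∀ δ : ℝ, 0 < δ → ∀ᵐ ω ∂P, ∃ t₀ : ℝ, ∀ t : ℝ, t₀ ≤ t →
      (1 - δ) • B ⊆ (1/t) • fppBall ω t ∧ (1/t) • fppBall ω t ⊆ (1 + δ) • B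

/-- `A` is `ε`-dense in `B` (w.r.t. the ℓ¹-metric). -/
def EpsDense (ε : ℝ) (A B : Set (ℝ × ℝ)) : Prop :=
  ∀ x ∈ B, ∃ y ∈ A, norm1 (x - y) < ε

lemma pi_map_eq {μ : Measure ℝ} {P : Measure (Edge → ℝ)}
    (hμprob : IsProbabilityMeasure μ) (hP : IsIIDProduct μ P) (s : Finset Edge) :
    Measure.pi (fun _ : {e // e ∈ s} => μ) = P.map (fun ω (i : {e // e ∈ s}) => ω i.1) := by
  classical
  refine Measure.pi_eq ?_
  intro B hB
  have hmeas : Measurable (fun (ω : Edge → ℝ) (i : {e // e ∈ s}) => ω i.1) :=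
    measurable_pi_lambda _ fun i => measurable_pi_apply i.1
  rw [Measure.map_apply hmeas (MeasurableSet.univ_pi hB)]
  set B' : Edge → Set ℝ := fun e => if h : e ∈ s then B ⟨e, h⟩ else Set.univ with hB'def
  have hset : (fun (ω : Edge → ℝ) (i : {e // e ∈ s}) => ω i.1) ⁻¹' (Set.univ.pi B)
      = {ω | ∀ e ∈ s, ω e ∈ B' e} := by
    ext (ω : Edge → ℝ)
    simp only [Set.mem_preimage, Set.mem_pi, Set.mem_univ, forall_true_left, Set.mem_setOf_eq]
    constructor
    · intro h e he
      simpa [hB'def, he] using h ⟨e, he⟩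
    · rintro h ⟨e, he⟩
      simpa [hB'def, he] using h e he
  rw [hset, hP.2 s B' (by intro e he; simp only [hB'def]; rw [dif_pos he]; exact hB _)]
  rw [← Finset.prod_coe_sort s (fun e => μ (B' e))]
  exact Finset.prod_congr rfl fun i _ => by simp [hB'def, i.2]

lemma key_null {μ : Measure ℝ} {P : Measure (Edge → ℝ)}
    (hμprob : IsProbabilityMeasure μ) (hP : IsIIDProduct μ P)
    {Q : Set ℝ} (hQmeas : MeasurableSet Q) (hQatomless : ∀ q ∈ Q, μ {q} = 0)
    (s : Finset Edge) (c : Edge → ℝ) (e₀ : Edge) (he₀ : e₀ ∈ s) (hc : c e₀ ≠ 0) :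
    P {ω | ∑ e ∈ s, c e * ω e = 0 ∧ ω e₀ ∈ Q} = 0 := by
  classical
  haveI := hμprob
  set ι := {e // e ∈ s} with hι
  set i₀ : ι := ⟨e₀, he₀⟩ with hi₀
  set p : ι → Prop := fun i => ¬(i = i₀) with hpdef
  letI : DecidablePred p := fun i => instDecidableNot
  letI hu : Unique {i : ι // ¬ p i} :=
    ⟨⟨⟨i₀, not_not_intro rfl⟩⟩, fun j => Subtype.ext (not_not.mp j.2)⟩
  have hmeas : Measurable (fun (ω : Edge → ℝ) (i : ι) => ω i.1) :=
    measurable_pi_lambda _ fun i => measurable_pi_apply i.1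
  set S : Set (ι → ℝ) := {f | ∑ i : ι, c i.1 * f i = 0 ∧ f i₀ ∈ Q} with hS
  have hsummeas : Measurable (fun f : ι → ℝ => ∑ i : ι, c i.1 * f i) :=
    Finset.measurable_sum _ fun i _ => (measurable_pi_apply i).const_mul _
  have hSmeas : MeasurableSet S :=
    (measurableSet_eq_fun hsummeas measurable_const).inter
      ((measurable_pi_apply i₀) hQmeas)
  have hpre : {ω : Edge → ℝ | ∑ e ∈ s, c e * ω e = 0 ∧ ω e₀ ∈ Q}
      = (fun (ω : Edge → ℝ) (i : ι) => ω i.1) ⁻¹' S := by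
    ext (ω : Edge → ℝ)
    simp only [Set.mem_setOf_eq, Set.mem_preimage, hS]
    rw [← Finset.sum_coe_sort s (fun e => c e * ω e)]
  rw [hpre, ← Measure.map_apply hmeas hSmeas, ← pi_map_eq hμprob hP s]
  -- now: Measure.pi (fun _ : ι => μ) S = 0
  have hMP := measurePreserving_piEquivPiSubtypeProd (fun _ : ι => μ) p
  set A : Set (({i // p i} → ℝ) × ({i : ι // ¬ p i} → ℝ)) :=
    {gh | (∑ i : {i // p i}, c i.1.1 * gh.1 i) + c e₀ * gh.2 default = 0
      ∧ gh.2 default ∈ Q} with hA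
  have hAmeas : MeasurableSet A := by
    refine (measurableSet_eq_fun ?_ measurable_const).inter
      (((measurable_pi_apply _).comp measurable_snd) hQmeas)
    exact ((Finset.measurable_sum _ fun i _ =>
      ((measurable_pi_apply i).comp measurable_fst).const_mul _).add
      (((measurable_pi_apply _).comp measurable_snd).const_mul _))
  have hsplit : ∀ f : ι → ℝ, ∑ i : ι, c i.1 * f i
      = (∑ i : {i // p i}, c i.1.1 * f i.1) + c e₀ * f i₀ := by
    intro f
    rw [← Fintype.sum_subtype_add_sum_subtype p (fun i : ι => c i.1 * f i),
      Fintype.sum_unique (fun i : {i : ι // ¬ p i} => c i.1.1 * f i.1)]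
    rfl
  have hSA : S = (MeasurableEquiv.piEquivPiSubtypeProd (fun _ : ι => ℝ) p) ⁻¹' A := by
    ext f
    simp only [hS, Set.mem_setOf_eq, Set.mem_preimage, hA,
      MeasurableEquiv.piEquivPiSubtypeProd, Equiv.piEquivPiSubtypeProd]
    rw [hsplit f]
    constructor
    · rintro ⟨h1, h2⟩; exact ⟨h1, h2⟩
    · rintro ⟨h1, h2⟩; exact ⟨h1, h2⟩
  rw [hSA, hMP.measure_preimage hAmeas.nullMeasurableSet]
  rw [Measure.prod_apply hAmeas]
  have hzero : ∀ g : {i // p i} → ℝ,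
      Measure.pi (fun _ : {i : ι // ¬ p i} => μ) (Prod.mk g ⁻¹' A) = 0 := by
    intro g
    set C := ∑ i : {i // p i}, c i.1.1 * g i with hC
    set W : Set ℝ := {t : ℝ | C + c e₀ * t = 0 ∧ t ∈ Q} with hW
    have hpre2 : Prod.mk g ⁻¹' A = Set.univ.pi (fun _ : {i : ι // ¬ p i} => W) := by
      ext h
      simp only [Set.mem_preimage, Set.mem_pi, Set.mem_univ, forall_true_left, hA, hW,
        Set.mem_setOf_eq]
      constructor
      · intro hh j
        rw [Subsingleton.elim j default]
        exact hh
      · intro hh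
        exact hh default
    rw [hpre2, Measure.pi_pi, Fintype.prod_unique (fun _ : {i : ι // ¬ p i} => μ W)]
    set v : ℝ := (-C) / c e₀ with hv
    refine measure_mono_null (fun t ht => ?_) (show μ ({v} ∩ Q) = 0 from ?_)
    · refine ⟨?_, ht.2⟩
      have : c e₀ * t = -C := by linarith [ht.1]
      simp only [Set.mem_singleton_iff, hv]
      field_simp
      linarith [this]
    · by_cases hvQ : v ∈ Q
      · exact measure_mono_null Set.inter_subset_left (hQatomless v hvQ)
      · rw [Set.singleton_inter_eq_empty.mpr hvQ, measure_empty]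
  calc ∫⁻ g, Measure.pi (fun _ : {i : ι // ¬ p i} => μ) (Prod.mk g ⁻¹' A)
        ∂(Measure.pi (fun _ : {i // p i} => μ))
      = ∫⁻ _, 0 ∂(Measure.pi (fun _ : {i // p i} => μ)) := lintegral_congr hzero
    _ = 0 := lintegral_zero

lemma bad_null {μ : Measure ℝ} {P : Measure (Edge → ℝ)}
    (hμprob : IsProbabilityMeasure μ) (hP : IsIIDProduct μ P)
    {Q : Set ℝ} (hQmeas : MeasurableSet Q) (hQatomless : ∀ q ∈ Q, μ {q} = 0)
    (L M : List Edge) (e₀ : Edge) (hL : e₀ ∈ L) (hM : e₀ ∉ M) :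
    P {ω | (L.map ω).sum = (M.map ω).sum ∧ ω e₀ ∈ Q} = 0 := by
  set s := (L ++ M).toFinset with hs
  have listsum_eq : ∀ (ω : Edge → ℝ) (N : List Edge), (∀ a ∈ N, a ∈ s) →
      (N.map ω).sum = ∑ e ∈ s, (N.count e : ℝ) * ω e := by
    intro ω N
    induction N with
    | nil => intro _; simp
    | cons a N ih =>
      intro h
      have ha : a ∈ s := h a List.mem_cons_self
      have hN : ∀ b ∈ N, b ∈ s := fun b hb => h b (List.mem_cons_of_mem _ hb)
      have hcnt : ∀ e : Edge, (((a :: N).count e : ℝ)) * ω e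
          = (N.count e : ℝ) * ω e + (if e = a then ω e else 0) := by
        intro e
        rw [List.count_cons]
        by_cases he : e = a
        · simp [he]; ring
        · simp [he]
          exact Or.inl (fun h' => he h'.symm)
      simp only [List.map_cons, List.sum_cons, hcnt, Finset.sum_add_distrib, ih hN,
        Finset.sum_ite_eq' s a (fun e => ω e), ha, if_true]
      ring
  set c : Edge → ℝ := fun a => (L.count a : ℝ) - (M.count a : ℝ) with hcdef
  have he₀s : e₀ ∈ s := by simp [hs, hL]
  have hc : c e₀ ≠ 0 := by
    have h1 : 0 < L.count e₀ := List.count_pos_iff.mpr hL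
    have h2 : M.count e₀ = 0 := List.count_eq_zero.mpr hM
    simp only [hcdef, h2, Nat.cast_zero, sub_zero]
    exact_mod_cast h1.ne'
  refine measure_mono_null (fun ω hω => ?_) (key_null hμprob hP hQmeas hQatomless s c e₀ he₀s hc)
  refine ⟨?_, hω.2⟩
  have hLs : (L.map ω).sum = ∑ e ∈ s, (L.count e : ℝ) * ω e :=
    listsum_eq ω L (by intro a ha; simp [hs, ha])
  have hMs : (M.map ω).sum = ∑ e ∈ s, (M.count e : ℝ) * ω e :=
    listsum_eq ω M (by intro a ha; simp [hs, ha])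
  have : ∑ e ∈ s, c e * ω e = (L.map ω).sum - (M.map ω).sum := by
    rw [hLs, hMs, ← Finset.sum_sub_distrib]
    exact Finset.sum_congr rfl fun e _ => by rw [hcdef]; ring
  rw [this, hω.1, sub_self]

/-- If `Q ⊆ (0,∞)` is Borel and carries no atoms of `μ ∈ ℳ`, then ℙ-a.s.
any two geodesics between the same pair of sites traverse exactly the same set of edges
whose passage time lies in `Q`. -/
theorem geodesics_share_Q_edges
    (μ : Measure ℝ) (hμ : MemM μ)
    (Q : Set ℝ) (hQmeas : MeasurableSet Q) (hQsub : Q ⊆ Set.Ioi 0)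
    (hQatomless : ∀ q ∈ Q, μ {q} = 0)
    (P : Measure (Edge → ℝ)) (hP : IsIIDProduct μ P) :
    ∀ᵐ ω ∂P, ∀ (x y : Site) (p q : List Site),
      IsGeodesic ω x y p → IsGeodesic ω x y q →
        ∀ e : Edge, ω e ∈ Q → (e ∈ pathEdges p ↔ e ∈ pathEdges q) := by
  have hμprob : IsProbabilityMeasure μ := hμ.1
  have hae : ∀ᵐ ω ∂P, ∀ z : List Site × List Site × Edge,
      ¬(pathTime ω z.1 = pathTime ω z.2.1 ∧ ω z.2.2 ∈ Q ∧
        z.2.2 ∈ pathEdges z.1 ∧ z.2.2 ∉ pathEdges z.2.1) := by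
    rw [MeasureTheory.ae_all_iff]
    intro z
    rw [ae_iff]
    simp only [not_not]
    by_cases hz : z.2.2 ∈ pathEdges z.1 ∧ z.2.2 ∉ pathEdges z.2.1
    · refine measure_mono_null (fun ω hω => ?_) (bad_null hμprob hP hQmeas hQatomless
        (pathEdges z.1) (pathEdges z.2.1) z.2.2 hz.1 hz.2)
      exact ⟨hω.1, hω.2.1⟩
    · refine measure_mono_null (fun ω hω => ?_) (measure_empty (μ := P))
      exact False.elim (hz ⟨hω.2.2.1, hω.2.2.2⟩)
  filter_upwards [hae] with ω hω
  intro x y p q hp hq e heQ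
  have hT : pathTime ω p = pathTime ω q := hp.2.trans hq.2.symm
  constructor
  · intro hep
    by_contra heq
    exact hω (p, q, e) ⟨hT, heQ, hep, heq⟩
  · intro heq
    by_contra hep
    exact hω (q, p, e) ⟨hT.symm, heQ, heq, hep⟩
end

section
/- Let τ : 𝔼 → [0,∞) be a fixed configuration of edge weights on ℤ² such that every pair of vertices is joined by at least one geodesic. Let (x_i)_{i∈ℕ} be a sequence of distinct vertices of ℤ² with τ(x_i, x_j) > 0 for all i ≠ j. For a set F ⊆ ℕ and i ∈ F, let C_i^F = {y ∈ ℤ² : τ(y, x_i) < τ(y, x_j) for all j ∈ F, j ≠ i}. If for every finite set F ⊆ ℕ and every i ∈ F the set C_i^F is infinite, then for every i ∈ ℕ the set C_i^ℕ = {y ∈ ℤ² : τ(y, x_i) < τ(y, x_j) for all j ≠ i} is infinite. -/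
open MeasureTheory
open scoped Pointwise

-- === aux ===
lemma pathEdges_nil : pathEdges [] = [] := rfl
lemma pathEdges_single (a : Site) : pathEdges [a] = [] := rfl
lemma pathEdges_cons (a b : Site) (l : List Site) :
    pathEdges (a :: b :: l) = siteEdge a b :: pathEdges (b :: l) := rfl

lemma pathTime_nonneg {ω : Edge → ℝ} (hω : ∀ e, 0 ≤ ω e) (p : List Site) :
    0 ≤ pathTime ω p := by
  apply List.sum_nonneg
  intro a ha
  simp only [List.mem_map] at ha
  obtain ⟨e, -, rfl⟩ := ha
  exact hω e

lemma T_le_pathTime {ω : Edge → ℝ} (hω : ∀ e, 0 ≤ ω e) {x y : Site} {p : List Site}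
    (hp : IsPath x y p) : T ω x y ≤ pathTime ω p := by
  apply csInf_le
  · exact ⟨0, by rintro t ⟨q, hq, rfl⟩; exact pathTime_nonneg hω q⟩
  · exact ⟨p, hp, rfl⟩

lemma pathEdges_append : ∀ (q : List Site) (z : Site) (t : List Site),
    q.getLast? = some z → pathEdges (q ++ t) = pathEdges q ++ pathEdges (z :: t)
  | [], z, t, h => by simp at h
  | [a], z, t, h => by
      simp only [List.getLast?_singleton, Option.some.injEq] at h
      subst h
      simp [pathEdges_single]
  | a :: c :: q', z, t, h => by
      rw [List.getLast?_cons_cons] at h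
      have ih := pathEdges_append (c :: q') z t h
      simp only [List.cons_append] at ih ⊢
      rw [pathEdges_cons, pathEdges_cons]
      rw [← List.cons_append] at ih
      simp only [List.cons_append] at ih
      rw [ih]
      simp

lemma pathTime_append (ω : Edge → ℝ) (q : List Site) (z : Site) (t : List Site)
    (h : q.getLast? = some z) :
    pathTime ω (q ++ t) = pathTime ω q + pathTime ω (z :: t) := by
  unfold pathTime
  rw [pathEdges_append q z t h, List.map_append, List.sum_append]

/-- Concatenation of paths. -/
lemma isPath_concat {y z w : Site} {q r : List Site} (hq : IsPath y z q) (hr : IsPath z w r) :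
    IsPath y w (q ++ r.tail) ∧
      ∀ ω : Edge → ℝ, pathTime ω (q ++ r.tail) = pathTime ω q + pathTime ω r := by
  obtain ⟨hqc, hqh, hql⟩ := hq
  obtain ⟨hrc, hrh, hrl⟩ := hr
  obtain ⟨t, rfl⟩ : ∃ t, r = z :: t := by
    cases r with
    | nil => simp at hrh
    | cons a t => exact ⟨t, by simpa using (by simpa using hrh : a = z) ▸ rfl⟩
  have htadj : ∀ u ∈ q.getLast?, ∀ v ∈ t.head?, SiteAdj u v := by
    intro u hu v hv
    rw [hql, Option.mem_some_iff] at hu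
    subst hu
    cases t with
    | nil => simp at hv
    | cons b t' =>
      have hb : v = b := by simpa using hv.symm
      subst hb
      exact (List.isChain_cons_cons.mp hrc).1
  constructor
  · refine ⟨hqc.append hrc.tail htadj, ?_, ?_⟩
    · cases q with
      | nil => simp at hqh
      | cons a q' => simpa using hqh
    · cases t with
      | nil =>
        simp only [List.tail_cons, List.append_nil]
        rw [hql]
        simpa using hrl
      | cons b t' =>
        rw [List.tail_cons, List.getLast?_append_cons]
        rw [List.getLast?_cons_cons] at hrl
        exact hrl
  · intro ω
    simp only [List.tail_cons]
    exact pathTime_append ω q z t hql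

/-- Splitting a path at a vertex it passes through. -/
lemma path_split : ∀ (p : List Site) (y w z : Site), IsPath y w p → z ∈ p →
    ∃ q r : List Site, IsPath y z q ∧ IsPath z w r ∧
      ∀ ω : Edge → ℝ, pathTime ω p = pathTime ω q + pathTime ω r
  | [], y, w, z, _, hz => by simp at hz
  | [a], y, w, z, hp, hz => by
      obtain ⟨hc, hh, hl⟩ := hp
      have hy : a = y := by simpa using hh
      have hw : a = w := by simpa using hl
      have hza : z = a := by simpa using hz
      subst hza; subst hy
      exact ⟨[z], [z], ⟨List.isChain_singleton _, by simp, by simp⟩, ⟨List.isChain_singleton _, by simp, by simpa using hl⟩,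
        fun ω => by simp [pathTime, pathEdges_single]⟩
  | a :: c :: t, y, w, z, hp, hz => by
      obtain ⟨hc, hh, hl⟩ := hp
      have hy : a = y := by simpa using hh
      subst hy
      rcases List.mem_cons.mp hz with hza | hzt
      · subst hza
        exact ⟨[z], z :: c :: t, ⟨List.isChain_singleton _, by simp, by simp⟩, ⟨hc, rfl, hl⟩,
          fun ω => by simp [pathTime, pathEdges_single]⟩
      · have hp' : IsPath c w (c :: t) := by
          refine ⟨hc.tail, rfl, ?_⟩
          rw [List.getLast?_cons_cons] at hl
          exact hl
        obtain ⟨q', r, hq', hr, htime⟩ := path_split (c :: t) c w z hp' hzt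
        obtain ⟨t', rfl⟩ : ∃ t', q' = c :: t' := by
          obtain ⟨-, hqh, -⟩ := hq'
          cases q' with
          | nil => simp at hqh
          | cons b t' => exact ⟨t', by simpa using (by simpa using hqh : b = c) ▸ rfl⟩
        refine ⟨a :: c :: t', r, ?_, hr, ?_⟩
        · obtain ⟨hq'c, -, hq'l⟩ := hq'
          refine ⟨List.isChain_cons_cons.mpr ⟨(List.isChain_cons_cons.mp hc).1, hq'c⟩, rfl, ?_⟩
          rw [List.getLast?_cons_cons]
          exact hq'l
        · intro ω
          have h1 : pathTime ω (a :: c :: t) = ω (siteEdge a c) + pathTime ω (c :: t) := by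
            simp [pathTime, pathEdges_cons]
          have h2 : pathTime ω (a :: c :: t') = ω (siteEdge a c) + pathTime ω (c :: t') := by
            simp [pathTime, pathEdges_cons]
          rw [h1, h2, htime ω]
          ring

/-- Monotonicity of victory along geodesics: if `y` is strictly closer to `a` than to `b`,
so is every vertex on a geodesic from `y` to `a`. -/
lemma geodesic_mono {τ : Edge → ℝ} (hτ : ∀ e, 0 ≤ τ e)
    (hgeo : ∀ x y : Site, ∃ p : List Site, IsGeodesic τ x y p)
    {a b y z : Site} {p : List Site} (hp : IsGeodesic τ y a p) (hz : z ∈ p)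
    (h : T τ y a < T τ y b) : T τ z a < T τ z b := by
  obtain ⟨hpp, hpt⟩ := hp
  obtain ⟨q, r, hq, hr, htime⟩ := path_split p y a z hpp hz
  obtain ⟨g, hg, hgt⟩ := hgeo z b
  obtain ⟨hconc, hconct⟩ := isPath_concat hq hg
  have h1 : T τ z a ≤ pathTime τ r := T_le_pathTime hτ hr
  have h2 : T τ y b ≤ pathTime τ q + T τ z b := by
    have := T_le_pathTime hτ hconc
    rw [hconct τ, hgt] at this
    exact this
  have h3 : pathTime τ q + pathTime τ r = T τ y a := by rw [← htime τ, hpt]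
  linarith

/-- ℓ¹ distance on the lattice. -/
def distL1 (c v : Site) : ℤ := |v.1 - c.1| + |v.2 - c.2|

lemma distL1_self (c : Site) : distL1 c c = 0 := by simp [distL1]

lemma distL1_nonneg (c v : Site) : 0 ≤ distL1 c v :=
  add_nonneg (abs_nonneg _) (abs_nonneg _)

lemma finite_ball (c : Site) (R : ℤ) : {v : Site | distL1 c v ≤ R}.Finite := by
  apply (Set.finite_Icc ((c.1 - R, c.2 - R) : Site) (c.1 + R, c.2 + R)).subset
  intro v hv
  simp only [Set.mem_setOf_eq, distL1] at hv
  have h1 : |v.1 - c.1| ≤ R := by have := abs_nonneg (v.2 - c.2); linarith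
  have h2 : |v.2 - c.2| ≤ R := by have := abs_nonneg (v.1 - c.1); linarith
  rw [abs_le] at h1 h2
  simp only [Set.mem_Icc, Prod.le_def]
  constructor <;> constructor <;> linarith [h1.1, h1.2, h2.1, h2.2]

lemma finite_sphere (c : Site) (R : ℤ) : {v : Site | distL1 c v = R}.Finite :=
  (finite_ball c R).subset fun v hv => le_of_eq hv

lemma adj_step (c : Site) {u v : Site} (h : SiteAdj u v) : distL1 c u ≤ distL1 c v + 1 := by
  have h1 := abs_sub_abs_le_abs_sub (u.1 - c.1) (v.1 - c.1)
  have h2 := abs_sub_abs_le_abs_sub (u.2 - c.2) (v.2 - c.2)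
  have e1 : u.1 - c.1 - (v.1 - c.1) = u.1 - v.1 := by ring
  have e2 : u.2 - c.2 - (v.2 - c.2) = u.2 - v.2 := by ring
  rw [e1] at h1; rw [e2] at h2
  unfold SiteAdj at h
  unfold distL1
  linarith

/-- Discrete intermediate value theorem along a lattice path. -/
lemma path_ivt (c : Site) (R : ℤ) : ∀ (p : List Site) (a b : Site),
    p.Chain' SiteAdj → p.head? = some a → p.getLast? = some b →
    distL1 c b ≤ R → R ≤ distL1 c a → ∃ z ∈ p, distL1 c z = R
  | [], a, b, _, hh, _, _, _ => by simp at hh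
  | [u], a, b, _, hh, hl, h1, h2 => by
      have ha : u = a := by simpa using hh
      have hb : u = b := by simpa using hl
      subst ha; subst hb
      exact ⟨u, by simp, le_antisymm (by simpa using h1) h2⟩
  | u :: v :: t, a, b, hc, hh, hl, h1, h2 => by
      have ha : u = a := by simpa using hh
      subst ha
      rcases eq_or_lt_of_le h2 with heq | hlt
      · exact ⟨u, by simp, heq.symm⟩
      · have hstep : distL1 c u ≤ distL1 c v + 1 := adj_step c (List.isChain_cons_cons.mp hc).1
        have hR : R ≤ distL1 c v := by omega
        obtain ⟨z, hz, hzR⟩ := path_ivt c R (v :: t) v b hc.tail rfl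
          (by rw [List.getLast?_cons_cons] at hl; exact hl) h1 hR
        exact ⟨z, List.mem_cons_of_mem _ hz, hzR⟩

/-- In a fixed configuration of nonnegative edge weights in which
geodesics exist, if every finite subfamily of the (distinct, pairwise positively-separated)
sources `(x i)` coexists — each finitely-competing colonized set `C i^F` is infinite — then
all the species coexist simultaneously: each `C i^ℕ` is infinite. -/
theorem finite_coexistence_implies_infinite_coexistence
    (τ : Edge → ℝ) (hτ : ∀ e, 0 ≤ τ e)
    (hgeo : ∀ x y : Site, ∃ p : List Site, IsGeodesic τ x y p)
    (x : ℕ → Site) (hinj : Function.Injective x)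
    (hpos : ∀ i j : ℕ, i ≠ j → 0 < T τ (x i) (x j))
    (hfin : ∀ F : Finset ℕ, ∀ i ∈ F,
      {y : Site | ∀ j ∈ F, j ≠ i → T τ y (x i) < T τ y (x j)}.Infinite) :
    ∀ i : ℕ, {y : Site | ∀ j : ℕ, j ≠ i → T τ y (x i) < T τ y (x j)}.Infinite := by
  intro i
  -- the decreasing family of finitely-competing colonized sets
  let C : ℕ → Set Site := fun n =>
    {y : Site | ∀ j : ℕ, j ≤ n → j ≠ i → T τ y (x i) < T τ y (x j)}
  have hCinf : ∀ n, (C n).Infinite := by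
    intro n
    have h := hfin (insert i (Finset.range (n + 1))) i (Finset.mem_insert_self _ _)
    apply h.mono
    intro y hy j hj hji
    exact hy j (Finset.mem_insert_of_mem (Finset.mem_range.mpr (Nat.lt_succ_of_le hj))) hji
  have hCanti : ∀ {m n : ℕ}, m ≤ n → C n ⊆ C m := by
    intro m n hmn y hy j hj hji
    exact hy j (le_trans hj hmn) hji
  -- for every radius R there is a simultaneous winner for i on the sphere of radius R
  have claim : ∀ R : ℕ, ∃ y : Site,
      (∀ j : ℕ, j ≠ i → T τ y (x i) < T τ y (x j)) ∧ distL1 (x i) y = (R : ℤ) := by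
    intro R
    have hsph : ∀ n, ∃ z, z ∈ C n ∧ distL1 (x i) z = (R : ℤ) := by
      intro n
      obtain ⟨y, hy⟩ := ((hCinf n).diff (finite_ball (x i) (R : ℤ))).nonempty
      have hyC : y ∈ C n := hy.1
      have hyfar : (R : ℤ) ≤ distL1 (x i) y :=
        le_of_lt (lt_of_not_ge (by simpa using hy.2))
      obtain ⟨p, hp⟩ := hgeo y (x i)
      obtain ⟨z, hzp, hzR⟩ := path_ivt (x i) (R : ℤ) p y (x i) hp.1.1 hp.1.2.1 hp.1.2.2
        (by rw [distL1_self]; exact_mod_cast Nat.zero_le R) hyfar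
      refine ⟨z, ?_, hzR⟩
      intro j hj hji
      exact geodesic_mono hτ hgeo hp hzp (hyC j hj hji)
    choose z hz using hsph
    have hfin' : {v : Site | distL1 (x i) v = (R : ℤ)}.Finite := finite_sphere _ _
    have : Finite ({v : Site | distL1 (x i) v = (R : ℤ)} : Set Site) := hfin'.to_subtype
    let g : ℕ → ({v : Site | distL1 (x i) v = (R : ℤ)} : Set Site) := fun n => ⟨z n, (hz n).2⟩
    obtain ⟨w, hw⟩ := Finite.exists_infinite_fiber g
    have hA : (g ⁻¹' {w} : Set ℕ).Infinite := Set.infinite_coe_iff.mp hw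
    have hwC : ∀ n, (w : Site) ∈ C n := by
      intro n
      obtain ⟨m, hm⟩ := (hA.diff (Set.finite_Iic n)).nonempty
      have hmn : n ≤ m := le_of_not_ge (by simpa [Set.mem_Iic] using hm.2)
      have hzm : z m = (w : Site) := congrArg Subtype.val hm.1
      exact hzm ▸ hCanti hmn (hz m).1
    exact ⟨(w : Site), fun j hj => hwC j j le_rfl hj, w.2⟩
  choose f hf using claim
  apply Set.infinite_of_injective_forall_mem (f := f)
  · intro R1 R2 hR
    have : (R1 : ℤ) = (R2 : ℤ) := by rw [← (hf R1).2, ← (hf R2).2, hR]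
    exact_mod_cast this
  · intro R
    exact (hf R).1
end
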